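/- Let (Ω, P) be a probability space, let a < b be integers, and let s : Ω → ℤ be measurable with a ≤ s ≤ b almost surely and P(s = j) > 0 for every j ∈ {a, …, b}. Then for every integer i, the tail sum Σ_{j=i}^{b} P(s = j)·(j − E[s]) is nonnegative, i.e., E[(s − E[s])·1_{s ≥ i}] ≥ 0. Consequently, since the denominator Σ_{j=a}^{b} P(s = j)·(j − a)·(j − E[s]) = Var(s) > 0, each population weight μ_i := (Σ_{j=i}^{b} P(s = j)·(j − E[s])) / (Σ_{j=a}^{b} P(s = j)·(j − a)·(j − E[s])) with i ∈ {a+1, …, b} is nonnegative. -/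

import Mathlib

open MeasureTheory

/-- The population weight
`μ_i = (Σ_{j=i}^{b} P(s = j)·(j − E[s])) / (Σ_{j=a}^{b} P(s = j)·(j − a)·(j − E[s]))`. -/
noncomputable def popWeight {Ω : Type*} [MeasurableSpace Ω] (P : Measure Ω)
    (s : Ω → ℤ) (a b i : ℤ) : ℝ :=
  (∑ j ∈ Finset.Icc i b, (P {ω | s ω = j}).toReal * ((j : ℝ) - ∫ ω, (s ω : ℝ) ∂P)) /
  (∑ j ∈ Finset.Icc a b,
    (P {ω | s ω = j}).toReal * ((j : ℝ) - (a : ℝ)) * ((j : ℝ) - ∫ ω, (s ω : ℝ) ∂P))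

section aux
variable {Ω : Type*} [MeasurableSpace Ω] {P : Measure Ω} [IsProbabilityMeasure P]
  {a b : ℤ} {s : Ω → ℤ}

lemma pj_zero (hrange : ∀ᵐ ω ∂P, a ≤ s ω ∧ s ω ≤ b) {j : ℤ} (hj : j ∉ Finset.Icc a b) :
    P {ω | s ω = j} = 0 := by
  rw [Finset.mem_Icc, not_and_or, not_le, not_le] at hj
  refine measure_mono_null (fun ω hω => ?_) (ae_iff.mp hrange)
  simp only [Set.mem_setOf_eq] at hω ⊢
  rcases hj with h | h <;> omega

lemma int_eq (hs : Measurable s) (hrange : ∀ᵐ ω ∂P, a ≤ s ω ∧ s ω ≤ b) (g : ℤ → ℝ) :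
    ∫ ω, g (s ω) ∂P = ∑ j ∈ Finset.Icc a b, (P {ω | s ω = j}).toReal * g j := by
  have hmeas : ∀ j : ℤ, MeasurableSet {ω | s ω = j} := fun j =>
    hs (measurableSet_singleton j)
  have hae : (fun ω => g (s ω)) =ᵐ[P]
      fun ω => ∑ j ∈ Finset.Icc a b, Set.indicator {ω' | s ω' = j} (fun _ => g j) ω := by
    filter_upwards [hrange] with ω hω
    rw [Finset.sum_eq_single (s ω)]
    · exact (Set.indicator_of_mem (show ω ∈ {ω' | s ω' = s ω} from rfl) fun _ => g (s ω)).symm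
    · intro j hj hne
      exact Set.indicator_of_notMem (fun (h : s ω = j) => hne h.symm) _
    · intro h; exact absurd (Finset.mem_Icc.2 hω) h
  rw [integral_congr_ae hae, integral_finset_sum]
  · refine Finset.sum_congr rfl fun j hj => ?_
    rw [integral_indicator_const _ (hmeas j)]
    simp [mul_comm, Measure.real]
  · intro j hj
    exact (integrable_const (g j)).indicator (hmeas j)

end aux

theorem stmt_5 {Ω : Type*} [MeasurableSpace Ω] (P : Measure Ω) [IsProbabilityMeasure P]
    (a b : ℤ) (hab : a < b) (s : Ω → ℤ) (hs : Measurable s)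
    (hrange : ∀ᵐ ω ∂P, a ≤ s ω ∧ s ω ≤ b)
    (hpos : ∀ j ∈ Finset.Icc a b, 0 < P {ω | s ω = j}) :
    (∀ i : ℤ,
      0 ≤ ∑ j ∈ Finset.Icc i b, (P {ω | s ω = j}).toReal * ((j : ℝ) - ∫ ω, (s ω : ℝ) ∂P)) ∧
    (∀ i : ℤ,
      0 ≤ ∫ ω, ((s ω : ℝ) - ∫ x, (s x : ℝ) ∂P) *
            Set.indicator {ω' | i ≤ s ω'} (fun _ => (1 : ℝ)) ω ∂P) ∧
    (∀ i ∈ Finset.Icc (a + 1) b, 0 ≤ popWeight P s a b i) := by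
  set m : ℝ := ∫ x, (s x : ℝ) ∂P with hm
  set p : ℤ → ℝ := fun j => (P {ω | s ω = j}).toReal with hp
  have hpnn : ∀ j, 0 ≤ p j := fun j => ENNReal.toReal_nonneg
  have hp0 : ∀ j ∉ Finset.Icc a b, p j = 0 := by
    intro j hj; simp [hp, pj_zero hrange hj]
  have hone : ∑ j ∈ Finset.Icc a b, p j * 1 = 1 := by
    have h := int_eq (P := P) hs hrange (fun _ => (1 : ℝ))
    simp only [integral_const, Measure.real, measure_univ, ENNReal.toReal_one, smul_eq_mul, one_mul] at h
    exact h.symm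
  have hmean : ∑ j ∈ Finset.Icc a b, p j * (j : ℝ) = m := by
    have h := int_eq (P := P) hs hrange (fun j => (j : ℝ))
    exact h.symm
  have hzero : ∑ j ∈ Finset.Icc a b, p j * ((j : ℝ) - m) = 0 := by
    have : ∑ j ∈ Finset.Icc a b, p j * ((j : ℝ) - m)
        = (∑ j ∈ Finset.Icc a b, p j * (j : ℝ)) - m * ∑ j ∈ Finset.Icc a b, p j * 1 := by
      rw [Finset.mul_sum, ← Finset.sum_sub_distrib]
      exact Finset.sum_congr rfl fun j _ => by ring
    rw [this, hone, hmean]; ring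
  -- core: filtered tail sums are nonnegative
  have hcore : ∀ i : ℤ,
      0 ≤ ∑ j ∈ (Finset.Icc a b).filter (fun j => i ≤ j), p j * ((j : ℝ) - m) := by
    intro i
    rcases le_or_gt (i : ℝ) m with h | h
    · have hsplit := Finset.sum_filter_add_sum_filter_not (Finset.Icc a b)
        (fun j => i ≤ j) (fun j => p j * ((j : ℝ) - m))
      have hneg : ∑ j ∈ (Finset.Icc a b).filter (fun j => ¬ i ≤ j),
          p j * ((j : ℝ) - m) ≤ 0 := by
        refine Finset.sum_nonpos fun j hj => ?_
        rw [Finset.mem_filter, not_le] at hj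
        have hji : (j : ℝ) < (i : ℝ) := by exact_mod_cast hj.2
        exact mul_nonpos_of_nonneg_of_nonpos (hpnn j) (by linarith)
      linarith [hzero ▸ hsplit]
    · refine Finset.sum_nonneg fun j hj => ?_
      rw [Finset.mem_filter] at hj
      have : m < (j : ℝ) := lt_of_lt_of_le h (by exact_mod_cast hj.2)
      exact mul_nonneg (hpnn j) (by linarith)
  -- the Icc i b sum equals the filtered sum
  have htail : ∀ i : ℤ, ∑ j ∈ Finset.Icc i b, p j * ((j : ℝ) - m)
      = ∑ j ∈ (Finset.Icc a b).filter (fun j => i ≤ j), p j * ((j : ℝ) - m) := by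
    intro i
    refine (Finset.sum_subset ?_ ?_).symm
    · intro j hj
      rw [Finset.mem_filter, Finset.mem_Icc] at hj
      exact Finset.mem_Icc.2 ⟨hj.2, hj.1.2⟩
    · intro j hj hj2
      have : j ∉ Finset.Icc a b := by
        intro hmem
        exact hj2 (Finset.mem_filter.2 ⟨hmem, (Finset.mem_Icc.1 hj).1⟩)
      rw [hp0 j this, zero_mul]
  have h1 : ∀ i : ℤ, 0 ≤ ∑ j ∈ Finset.Icc i b, p j * ((j : ℝ) - m) := by
    intro i; rw [htail i]; exact hcore i
  refine ⟨h1, ?_, ?_⟩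
  · -- integral form
    intro i
    have heq : (fun ω => ((s ω : ℝ) - m) * Set.indicator {ω' | i ≤ s ω'} (fun _ => (1:ℝ)) ω)
        = fun ω => (fun j : ℤ => ((j : ℝ) - m) * (if i ≤ j then (1:ℝ) else 0)) (s ω) := by
      funext ω
      rw [Set.indicator_apply]
      rfl
    calc (0:ℝ) ≤ ∑ j ∈ (Finset.Icc a b).filter (fun j => i ≤ j), p j * ((j : ℝ) - m) :=
          hcore i
      _ = ∑ j ∈ Finset.Icc a b, p j * (((j : ℝ) - m) * (if i ≤ j then (1:ℝ) else 0)) := by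
          rw [Finset.sum_filter]
          exact Finset.sum_congr rfl fun j _ => by split_ifs <;> ring
      _ = ∫ ω, ((s ω : ℝ) - m) * Set.indicator {ω' | i ≤ s ω'} (fun _ => (1:ℝ)) ω ∂P := by
          rw [heq]
          exact (int_eq (P := P) hs hrange (fun j : ℤ => ((j : ℝ) - m) * (if i ≤ j then (1:ℝ) else 0))).symm
  · -- popWeight nonneg
    intro i hi
    have hden : 0 ≤ ∑ j ∈ Finset.Icc a b, p j * ((j : ℝ) - (a : ℝ)) * ((j : ℝ) - m) := by
      have : ∑ j ∈ Finset.Icc a b, p j * ((j : ℝ) - (a : ℝ)) * ((j : ℝ) - m)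
          = (∑ j ∈ Finset.Icc a b, p j * ((j : ℝ) - m) ^ 2)
            + (m - (a : ℝ)) * ∑ j ∈ Finset.Icc a b, p j * ((j : ℝ) - m) := by
        rw [Finset.mul_sum, ← Finset.sum_add_distrib]
        exact Finset.sum_congr rfl fun j _ => by ring
      rw [this, hzero, mul_zero, add_zero]
      exact Finset.sum_nonneg fun j _ => mul_nonneg (hpnn j) (sq_nonneg _)
    exact div_nonneg (h1 i) hden
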